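/- In a two-component symmetric Gaussian mixture guided toward component y = +1 with classifier guidance of strength η ≥ 0, the guided score s̃(x) = ∇log p(x) + η∇log c(+1|x) shifts probability mass toward the component: the resulting tilted density proportional to p(x)·c(+1|x)^η has mean whose inner product with μ is nondecreasing in η. -/

import Mathlib

/-!
STATEMENT 11: In the two-component symmetric Gaussian mixture guided toward component
y = +1 with classifier guidance strength η ≥ 0, the tilted density q_η ∝ p·c(+1|·)^η
shifts mass toward the component: η ↦ E_{q_η}[⟨μ,x⟩] is nondecreasing on η ≥ 0.

Here p is the density of ½N(μ,I) + ½N(−μ,I) and c(+1|x) is the posterior probability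
of the +1 component; expectations are written as ratios of Lebesgue integrals.
-/

open MeasureTheory

noncomputable def isoGaussD (D : ℕ) (m x : EuclideanSpace ℝ (Fin D)) : ℝ :=
  (Real.sqrt ((2 * Real.pi) ^ D))⁻¹ * Real.exp (-‖x - m‖ ^ 2 / 2)

theorem guidance_shifts_mass_toward_component
    (D : ℕ) (μ : EuclideanSpace ℝ (Fin D))
    (p c : EuclideanSpace ℝ (Fin D) → ℝ)
    (hp : ∀ x, p x = (1/2) * isoGaussD D μ x + (1/2) * isoGaussD D (-μ) x)
    (hc : ∀ x, c x = isoGaussD D μ x / (isoGaussD D μ x + isoGaussD D (-μ) x))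
    (w : ℝ → EuclideanSpace ℝ (Fin D) → ℝ)
    (hw : ∀ η x, w η x = p x * (c x) ^ η)
    (hInt : ∀ η ≥ (0:ℝ), Integrable (w η) (volume : Measure (EuclideanSpace ℝ (Fin D))))
    (hInt' : ∀ η ≥ (0:ℝ), Integrable (fun x => (inner ℝ μ x : ℝ) * w η x)
      (volume : Measure (EuclideanSpace ℝ (Fin D))))
    (F : ℝ → ℝ)
    (hF : ∀ η, F η = (∫ x, (inner ℝ μ x : ℝ) * w η x) / (∫ x, w η x)) :
    ∀ η₁ η₂, 0 ≤ η₁ → η₁ ≤ η₂ → F η₁ ≤ F η₂ := by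
  intro η₁ η₂ hη₁ hle
  have hη₂ : (0:ℝ) ≤ η₂ := le_trans hη₁ hle
  -- positivity of the Gaussians
  have hZpos : (0:ℝ) < (Real.sqrt ((2 * Real.pi) ^ D))⁻¹ := by
    have : (0:ℝ) < (2 * Real.pi) ^ D := pow_pos (by positivity) D
    exact inv_pos.mpr (Real.sqrt_pos.mpr this)
  have hgpos : ∀ (m x : EuclideanSpace ℝ (Fin D)), 0 < isoGaussD D m x := by
    intro m x
    exact mul_pos hZpos (Real.exp_pos _)
  have hppos : ∀ x, 0 < p x := by
    intro x
    rw [hp]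
    have h1 := hgpos μ x
    have h2 := hgpos (-μ) x
    nlinarith
  -- the Gaussian ratio identity
  have hratio : ∀ x : EuclideanSpace ℝ (Fin D),
      isoGaussD D (-μ) x = isoGaussD D μ x * Real.exp (-(2 * (inner ℝ μ x : ℝ))) := by
    intro x
    unfold isoGaussD
    have hsub : x - -μ = x + μ := by abel
    rw [hsub]
    have hcomm : (inner ℝ x μ : ℝ) = (inner ℝ μ x : ℝ) := real_inner_comm μ x
    have hnorm : ‖x + μ‖ ^ 2 = ‖x - μ‖ ^ 2 + 4 * (inner ℝ μ x : ℝ) := by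
      have h1 := norm_add_sq_real x μ
      have h2 := norm_sub_sq_real x μ
      rw [hcomm] at h1 h2
      linarith
    rw [hnorm, mul_assoc, ← Real.exp_add]
    ring_nf
  -- closed form for c
  have hcform : ∀ x : EuclideanSpace ℝ (Fin D),
      c x = (1 + Real.exp (-(2 * (inner ℝ μ x : ℝ))))⁻¹ := by
    intro x
    rw [hc, hratio x]
    have hg := hgpos μ x
    have hepos : (0:ℝ) < 1 + Real.exp (-(2 * (inner ℝ μ x : ℝ))) := by positivity
    field_simp
  have hcpos : ∀ x : EuclideanSpace ℝ (Fin D), 0 < c x := by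
    intro x
    rw [hcform]
    positivity
  have hcmono : ∀ x y : EuclideanSpace ℝ (Fin D),
      (inner ℝ μ x : ℝ) ≤ (inner ℝ μ y : ℝ) → c x ≤ c y := by
    intro x y hxy
    rw [hcform, hcform]
    have h1 : (0:ℝ) < 1 + Real.exp (-(2 * (inner ℝ μ y : ℝ))) := by positivity
    have h2 : 1 + Real.exp (-(2 * (inner ℝ μ y : ℝ)))
        ≤ 1 + Real.exp (-(2 * (inner ℝ μ x : ℝ))) := by
      have := Real.exp_le_exp.mpr
        (by linarith : -(2 * (inner ℝ μ y : ℝ)) ≤ -(2 * (inner ℝ μ x : ℝ)))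
      linarith
    exact inv_anti₀ h1 h2
  -- positivity of the weights
  have hwpos : ∀ η, ∀ x : EuclideanSpace ℝ (Fin D), 0 < w η x := by
    intro η x
    rw [hw]
    exact mul_pos (hppos x) (Real.rpow_pos_of_pos (hcpos x) η)
  -- key pointwise correlation inequality
  have key : ∀ x y : EuclideanSpace ℝ (Fin D),
      0 ≤ ((inner ℝ μ x : ℝ) - (inner ℝ μ y : ℝ))
        * (w η₂ x * w η₁ y - w η₁ x * w η₂ y) := by
    intro x y
    have hmain : ∀ a b : EuclideanSpace ℝ (Fin D), (inner ℝ μ b : ℝ) ≤ (inner ℝ μ a : ℝ) →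
        w η₁ a * w η₂ b ≤ w η₂ a * w η₁ b := by
      intro a b hba
      have hca := hcpos a
      have hcb := hcpos b
      have hcba : c b ≤ c a := hcmono b a hba
      have hδ : (0:ℝ) ≤ η₂ - η₁ := by linarith
      have hsplit : ∀ z : EuclideanSpace ℝ (Fin D),
          w η₂ z = w η₁ z * c z ^ (η₂ - η₁) := by
        intro z
        have hzc : c z ^ η₂ = c z ^ η₁ * c z ^ (η₂ - η₁) := by
          rw [← Real.rpow_add (hcpos z)]
          congr 1
          ring
        rw [hw, hw, hzc]
        ring
      rw [hsplit a, hsplit b]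
      have hrpow : c b ^ (η₂ - η₁) ≤ c a ^ (η₂ - η₁) :=
        Real.rpow_le_rpow (le_of_lt hcb) hcba hδ
      have hK : (0:ℝ) ≤ w η₁ a * w η₁ b := le_of_lt (mul_pos (hwpos η₁ a) (hwpos η₁ b))
      calc w η₁ a * (w η₁ b * c b ^ (η₂ - η₁))
          = (w η₁ a * w η₁ b) * c b ^ (η₂ - η₁) := by ring
        _ ≤ (w η₁ a * w η₁ b) * c a ^ (η₂ - η₁) := mul_le_mul_of_nonneg_left hrpow hK
        _ = w η₁ a * c a ^ (η₂ - η₁) * w η₁ b := by ring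
    rcases le_total ((inner ℝ μ y : ℝ)) ((inner ℝ μ x : ℝ)) with h | h
    · have h2 := hmain x y h
      exact mul_nonneg (by linarith) (by linarith)
    · have h2 := hmain y x h
      have := mul_nonneg (by linarith : (0:ℝ) ≤ (inner ℝ μ y : ℝ) - (inner ℝ μ x : ℝ))
        (by linarith : (0:ℝ) ≤ w η₁ x * w η₂ y - w η₂ x * w η₁ y)
      nlinarith
  -- integrability facts
  have hIf := hInt η₁ hη₁
  have hIg := hInt η₂ hη₂
  have hIf' := hInt' η₁ hη₁
  have hIg' := hInt' η₂ hη₂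
  set A₁ : ℝ := ∫ x, (inner ℝ μ x : ℝ) * w η₁ x with hA₁
  set A₂ : ℝ := ∫ x, (inner ℝ μ x : ℝ) * w η₂ x with hA₂
  set B₁ : ℝ := ∫ x, w η₁ x with hB₁
  set B₂ : ℝ := ∫ x, w η₂ x with hB₂
  -- positivity of normalizers
  have hBpos : ∀ η, Integrable (w η) (volume : Measure (EuclideanSpace ℝ (Fin D))) →
      0 < ∫ x, w η x := by
    intro η hint
    rw [MeasureTheory.integral_pos_iff_support_of_nonneg
      (fun x => le_of_lt (hwpos η x)) hint]
    have hsupp : Function.support (w η) = Set.univ := by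
      ext x; simp [Function.mem_support, ne_of_gt (hwpos η x)]
    rw [hsupp]
    exact isOpen_univ.measure_pos volume ⟨0, trivial⟩
  have hB₁pos : 0 < B₁ := hBpos η₁ hIf
  have hB₂pos : 0 < B₂ := hBpos η₂ hIg
  -- Fubini computation of the double integral
  set P := ((volume : Measure (EuclideanSpace ℝ (Fin D))).prod
    (volume : Measure (EuclideanSpace ℝ (Fin D)))) with hP
  have hT1 : Integrable
      (fun z : EuclideanSpace ℝ (Fin D) × EuclideanSpace ℝ (Fin D) =>
        (inner ℝ μ z.1 : ℝ) * w η₂ z.1 * w η₁ z.2) P := hIg'.mul_prod hIf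
  have hT2 : Integrable
      (fun z : EuclideanSpace ℝ (Fin D) × EuclideanSpace ℝ (Fin D) =>
        (inner ℝ μ z.1 : ℝ) * w η₁ z.1 * w η₂ z.2) P := hIf'.mul_prod hIg
  have hT3 : Integrable
      (fun z : EuclideanSpace ℝ (Fin D) × EuclideanSpace ℝ (Fin D) =>
        w η₂ z.1 * ((inner ℝ μ z.2 : ℝ) * w η₁ z.2)) P := hIg.mul_prod hIf'
  have hT4 : Integrable
      (fun z : EuclideanSpace ℝ (Fin D) × EuclideanSpace ℝ (Fin D) =>
        w η₁ z.1 * ((inner ℝ μ z.2 : ℝ) * w η₂ z.2)) P := hIf.mul_prod hIg'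
  have e1 : (∫ z : EuclideanSpace ℝ (Fin D) × EuclideanSpace ℝ (Fin D),
      (inner ℝ μ z.1 : ℝ) * w η₂ z.1 * w η₁ z.2 ∂P) = A₂ * B₁ :=
    MeasureTheory.integral_prod_mul (fun x => (inner ℝ μ x : ℝ) * w η₂ x) (w η₁)
  have e2 : (∫ z : EuclideanSpace ℝ (Fin D) × EuclideanSpace ℝ (Fin D),
      (inner ℝ μ z.1 : ℝ) * w η₁ z.1 * w η₂ z.2 ∂P) = A₁ * B₂ :=
    MeasureTheory.integral_prod_mul (fun x => (inner ℝ μ x : ℝ) * w η₁ x) (w η₂)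
  have e3 : (∫ z : EuclideanSpace ℝ (Fin D) × EuclideanSpace ℝ (Fin D),
      w η₂ z.1 * ((inner ℝ μ z.2 : ℝ) * w η₁ z.2) ∂P) = B₂ * A₁ :=
    MeasureTheory.integral_prod_mul (w η₂) (fun x => (inner ℝ μ x : ℝ) * w η₁ x)
  have e4 : (∫ z : EuclideanSpace ℝ (Fin D) × EuclideanSpace ℝ (Fin D),
      w η₁ z.1 * ((inner ℝ μ z.2 : ℝ) * w η₂ z.2) ∂P) = B₁ * A₂ :=
    MeasureTheory.integral_prod_mul (w η₁) (fun x => (inner ℝ μ x : ℝ) * w η₂ x)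
  have hexp : (fun z : EuclideanSpace ℝ (Fin D) × EuclideanSpace ℝ (Fin D) =>
        ((inner ℝ μ z.1 : ℝ) - (inner ℝ μ z.2 : ℝ))
          * (w η₂ z.1 * w η₁ z.2 - w η₁ z.1 * w η₂ z.2))
      = fun z => ((inner ℝ μ z.1 : ℝ) * w η₂ z.1 * w η₁ z.2
            - (inner ℝ μ z.1 : ℝ) * w η₁ z.1 * w η₂ z.2
            - w η₂ z.1 * ((inner ℝ μ z.2 : ℝ) * w η₁ z.2))
          + w η₁ z.1 * ((inner ℝ μ z.2 : ℝ) * w η₂ z.2) := by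
    funext z
    ring
  have hI12 : Integrable
      (fun z : EuclideanSpace ℝ (Fin D) × EuclideanSpace ℝ (Fin D) =>
        (inner ℝ μ z.1 : ℝ) * w η₂ z.1 * w η₁ z.2
          - (inner ℝ μ z.1 : ℝ) * w η₁ z.1 * w η₂ z.2) P := hT1.sub hT2
  have hI123 : Integrable
      (fun z : EuclideanSpace ℝ (Fin D) × EuclideanSpace ℝ (Fin D) =>
        (inner ℝ μ z.1 : ℝ) * w η₂ z.1 * w η₁ z.2
          - (inner ℝ μ z.1 : ℝ) * w η₁ z.1 * w η₂ z.2
          - w η₂ z.1 * ((inner ℝ μ z.2 : ℝ) * w η₁ z.2)) P := hI12.sub hT3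
  have hdouble : (∫ z : EuclideanSpace ℝ (Fin D) × EuclideanSpace ℝ (Fin D),
        ((inner ℝ μ z.1 : ℝ) - (inner ℝ μ z.2 : ℝ))
          * (w η₂ z.1 * w η₁ z.2 - w η₁ z.1 * w η₂ z.2) ∂P)
      = ((A₂ * B₁ - A₁ * B₂) - B₂ * A₁) + B₁ * A₂ := by
    rw [hexp, MeasureTheory.integral_add hI123 hT4,
        MeasureTheory.integral_sub hI12 hT3,
        MeasureTheory.integral_sub hT1 hT2, e1, e2, e3, e4]
  have hnonneg : 0 ≤ (∫ z : EuclideanSpace ℝ (Fin D) × EuclideanSpace ℝ (Fin D),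
        ((inner ℝ μ z.1 : ℝ) - (inner ℝ μ z.2 : ℝ))
          * (w η₂ z.1 * w η₁ z.2 - w η₁ z.1 * w η₂ z.2) ∂P) :=
    MeasureTheory.integral_nonneg (fun z => key z.1 z.2)
  rw [hdouble] at hnonneg
  have hcross : A₁ * B₂ ≤ A₂ * B₁ := by linarith
  rw [hF, hF, div_le_div_iff₀ hB₁pos hB₂pos]
  exact hcross
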